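/- If D is a field and SL(2,D) admits a nontrivial group homomorphism into ℂˣ, then D is isomorphic to F₂ or to F₃. -/

import Mathlib

open Matrix Polynomial

namespace SL2Aux

variable {D : Type*} [Field D]

/-- upper elementary matrix -/
def E (a : D) : Matrix.SpecialLinearGroup (Fin 2) D :=
  ⟨!![1, a; 0, 1], by simp [Matrix.det_fin_two_of]⟩

/-- lower elementary matrix -/
def E' (a : D) : Matrix.SpecialLinearGroup (Fin 2) D :=
  ⟨!![1, 0; a, 1], by simp [Matrix.det_fin_two_of]⟩

/-- diagonal matrix diag(u, u⁻¹) -/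
def Dg (u : D) (hu : u ≠ 0) : Matrix.SpecialLinearGroup (Fin 2) D :=
  ⟨!![u, 0; 0, u⁻¹], by simp [Matrix.det_fin_two_of, mul_inv_cancel₀ hu]⟩

lemma E_mul (a b : D) : E a * E b = E (a + b) := by
  apply Subtype.ext
  show (E a).1 * (E b).1 = _
  simp only [E]
  ext i j
  fin_cases i <;> fin_cases j <;>
    simp [Matrix.mul_apply, Fin.sum_univ_two] <;> ring

lemma E'_mul (a b : D) : E' a * E' b = E' (a + b) := by
  apply Subtype.ext
  show (E' a).1 * (E' b).1 = _
  simp only [E']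
  ext i j
  fin_cases i <;> fin_cases j <;>
    simp [Matrix.mul_apply, Fin.sum_univ_two] <;> ring

lemma E_zero : (E (0 : D)) = 1 := by
  apply Subtype.ext
  simp only [E]
  ext i j
  fin_cases i <;> fin_cases j <;> simp

lemma E'_zero : (E' (0 : D)) = 1 := by
  apply Subtype.ext
  simp only [E']
  ext i j
  fin_cases i <;> fin_cases j <;> simp

lemma Dg_E (u : D) (hu : u ≠ 0) (a : D) :
    Dg u hu * E a = E (u * u * a) * Dg u hu := by
  apply Subtype.ext
  show (Dg u hu).1 * (E a).1 = (E (u*u*a)).1 * (Dg u hu).1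
  simp only [Dg, E]
  ext i j
  fin_cases i <;> fin_cases j <;>
    simp [Matrix.mul_apply, Fin.sum_univ_two] <;> field_simp <;> ring

lemma Dg_E' (u : D) (hu : u ≠ 0) (a : D) :
    Dg u hu * E' a = E' (u⁻¹ * u⁻¹ * a) * Dg u hu := by
  apply Subtype.ext
  show (Dg u hu).1 * (E' a).1 = (E' (u⁻¹*u⁻¹*a)).1 * (Dg u hu).1
  simp only [Dg, E']
  ext i j
  fin_cases i <;> fin_cases j <;>
    simp [Matrix.mul_apply, Fin.sum_univ_two] <;> field_simp <;> ring

lemma decomp_key (a b c d : D) (hc : c ≠ 0) (hdet : a * d - b * c = 1) :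
    (!![a, b; c, d] : Matrix (Fin 2) (Fin 2) D) =
      !![1, (a - 1) / c; 0, 1] * !![1, 0; c, 1] * !![1, (d - 1) / c; 0, 1] := by
  rw [Matrix.mul_fin_two, Matrix.mul_fin_two]
  ext i j
  fin_cases i <;> fin_cases j <;> simp
  · field_simp
    ring
  · field_simp
    linear_combination -hdet
  · field_simp
    ring

lemma decomp (A : Matrix.SpecialLinearGroup (Fin 2) D) (hc : A.1 1 0 ≠ 0) :
    A = E ((A.1 0 0 - 1) / A.1 1 0) * E' (A.1 1 0) * E ((A.1 1 1 - 1) / A.1 1 0) := by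
  have hdet : A.1 0 0 * A.1 1 1 - A.1 0 1 * A.1 1 0 = 1 := by
    have := A.2
    rwa [Matrix.det_fin_two] at this
  have h := decomp_key (A.1 0 0) (A.1 0 1) (A.1 1 0) (A.1 1 1) hc hdet
  apply Subtype.ext
  show A.1 = !![1, (A.1 0 0 - 1) / A.1 1 0; 0, 1] * !![1, 0; A.1 1 0, 1]
      * !![1, (A.1 1 1 - 1) / A.1 1 0; 0, 1]
  conv_lhs => rw [Matrix.eta_fin_two A.1]
  exact h

end SL2Aux

open SL2Aux

theorem field_with_nontrivial_char {D : Type*} [Field D]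
    (χ : Matrix.SpecialLinearGroup (Fin 2) D →* ℂˣ) (hχ : χ ≠ 1) :
    Nonempty (D ≃+* ZMod 2) ∨ Nonempty (D ≃+* ZMod 3) := by
  by_cases h : ∃ u : D, u ≠ 0 ∧ u * u ≠ 1
  · -- then χ = 1, contradiction
    exfalso
    obtain ⟨u, hu, hu2⟩ := h
    -- χ is trivial on upper elementary matrices
    have hE : ∀ a : D, χ (E a) = 1 := by
      have key : ∀ a : D, χ (E ((u * u - 1) * a)) = 1 := by
        intro a
        have h1 : χ (Dg u hu) * χ (E a) = χ (E (u * u * a)) * χ (Dg u hu) := by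
          rw [← _root_.map_mul, ← _root_.map_mul, Dg_E]
        have h2 : χ (E (u * u * a)) = χ (E a) := by
          have := mul_comm (χ (Dg u hu)) (χ (E a))
          rw [h1] at this
          exact mul_right_cancel this
        have h3 : E (u * u * a) = E a * E ((u * u - 1) * a) := by
          rw [E_mul]; ring_nf
        rw [h3, _root_.map_mul] at h2
        exact mul_left_cancel (h2.trans (mul_one _).symm)
      intro b
      have hne : u * u - 1 ≠ 0 := sub_ne_zero.mpr hu2
      have := key ((u * u - 1)⁻¹ * b)
      rwa [← mul_assoc, mul_inv_cancel₀ hne, one_mul] at this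
    have hE' : ∀ a : D, χ (E' a) = 1 := by
      have hui : u⁻¹ ≠ 0 := inv_ne_zero hu
      have hui2 : u⁻¹ * u⁻¹ ≠ 1 := by
        intro hcon
        apply hu2
        have : u * u * (u⁻¹ * u⁻¹) = u * u * 1 := by rw [hcon]
        field_simp at this
        rw [this]
        ring
      have key : ∀ a : D, χ (E' ((u⁻¹ * u⁻¹ - 1) * a)) = 1 := by
        intro a
        have h1 : χ (Dg u hu) * χ (E' a) = χ (E' (u⁻¹ * u⁻¹ * a)) * χ (Dg u hu) := by
          rw [← _root_.map_mul, ← _root_.map_mul, Dg_E']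
        have h2 : χ (E' (u⁻¹ * u⁻¹ * a)) = χ (E' a) := by
          have := mul_comm (χ (Dg u hu)) (χ (E' a))
          rw [h1] at this
          exact mul_right_cancel this
        have h3 : E' (u⁻¹ * u⁻¹ * a) = E' a * E' ((u⁻¹ * u⁻¹ - 1) * a) := by
          rw [E'_mul]; ring_nf
        rw [h3, _root_.map_mul] at h2
        exact mul_left_cancel (h2.trans (mul_one _).symm)
      intro b
      have hne : u⁻¹ * u⁻¹ - 1 ≠ 0 := sub_ne_zero.mpr hui2
      have := key ((u⁻¹ * u⁻¹ - 1)⁻¹ * b)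
      rwa [← mul_assoc, mul_inv_cancel₀ hne, one_mul] at this
    have hA1 : ∀ A : Matrix.SpecialLinearGroup (Fin 2) D, A.1 1 0 ≠ 0 → χ A = 1 := by
      intro A hc
      rw [decomp A hc, _root_.map_mul, _root_.map_mul, hE, hE', hE, mul_one, mul_one]
    have hA : ∀ A : Matrix.SpecialLinearGroup (Fin 2) D, χ A = 1 := by
      intro A
      by_cases hc : A.1 1 0 = 0
      · have hdet : A.1 0 0 * A.1 1 1 - A.1 0 1 * A.1 1 0 = 1 := by
          have := A.2
          rwa [Matrix.det_fin_two] at this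
        have hd : A.1 1 1 ≠ 0 := by
          intro h0
          rw [h0, hc] at hdet
          simp at hdet
        have hB : (A * E' 1).1 1 0 ≠ 0 := by
          have hmul : (A * E' 1).1 = A.1 * (E' 1).1 := rfl
          rw [hmul]
          simp only [E']
          rw [Matrix.mul_apply, Fin.sum_univ_two]
          simpa [hc] using hd
        have h1 : χ (A * E' 1) = 1 := hA1 _ hB
        rw [_root_.map_mul, hE', mul_one] at h1
        exact h1
      · exact hA1 A hc
    exact hχ (MonoidHom.ext fun A => hA A)
  · -- D is small
    push_neg at h
    have hall : ∀ x : D, x ^ 3 = x := by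
      intro x
      by_cases hx : x = 0
      · simp [hx]
      · have := h x hx
        calc x ^ 3 = x * x * x := by ring
        _ = 1 * x := by rw [this]
        _ = x := one_mul x
    -- D is finite of cardinality ≤ 3
    set p : Polynomial D := X ^ 3 - X with hp
    have hpne : p ≠ 0 := by
      intro h0
      have : p.coeff 3 = 0 := by rw [h0]; simp
      rw [hp] at this
      simp [coeff_X] at this
    have hroot : ∀ x : D, p.IsRoot x := by
      intro x
      simp [hp, Polynomial.IsRoot, hall x]
    have hfin : (Set.univ : Set D).Finite := by
      have := Polynomial.finite_setOf_isRoot (p := p) hpne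
      exact this.subset (fun x _ => hroot x)
    have : Finite D := Set.finite_univ_iff.mp hfin
    have : Fintype D := Fintype.ofFinite D
    have : DecidableEq D := Classical.decEq D
    have hcard3 : Fintype.card D ≤ 3 := by
      have hdeg : p.natDegree = 3 := by
        rw [hp]
        compute_degree!
      have hsub : (Finset.univ : Finset D) ⊆ p.roots.toFinset := by
        intro x _
        rw [Multiset.mem_toFinset, Polynomial.mem_roots hpne]
        exact hroot x
      calc Fintype.card D = (Finset.univ : Finset D).card := rfl
        _ ≤ p.roots.toFinset.card := Finset.card_le_card hsub
        _ ≤ Multiset.card p.roots := p.roots.toFinset_card_le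
        _ ≤ p.natDegree := p.card_roots'
        _ = 3 := hdeg
    have hcard2 : 2 ≤ Fintype.card D := Fintype.one_lt_card
    interval_cases hc : Fintype.card D
    · exact Or.inl ⟨(ZMod.ringEquivOfPrime D Nat.prime_two hc).symm⟩
    · exact Or.inr ⟨(ZMod.ringEquivOfPrime D Nat.prime_three hc).symm⟩
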